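/- Let A = (a_ij) be an n×n symmetrically reciprocal matrix with positive entries. A positive vector x ∈ ℝⁿ minimizes the function f(x) = ∑_{i,j} (log a_ij − log x_i + log x_j)² over all positive vectors if and only if there exists u > 0 such that x_i = u·(∏_{j=1}^{n} a_ij)^{1/n} for every i. In particular, the geometric-mean vector with entries (∏_{j=1}^{n} a_ij)^{1/n} is a minimizer, and all minimizers are its positive scalar multiples. -/

import Mathlib

lemma sum_sq_decomp_aux (n : ℕ) (r : Fin n → Fin n → ℝ)
    (hrow : ∀ i, ∑ j, r i j = 0) (hcol : ∀ j, ∑ i, r i j = 0) (e : Fin n → ℝ) :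
    ∑ i, ∑ j, (r i j - e i + e j) ^ 2 =
      (∑ i, ∑ j, (r i j) ^ 2) + ∑ i, ∑ j, (e i - e j) ^ 2 := by
  have h1 : ∑ i, ∑ j, (e i * r i j) = 0 := by
    simp only [← Finset.mul_sum]
    simp [hrow]
  have h2 : ∑ i, ∑ j, (e j * r i j) = 0 := by
    rw [Finset.sum_comm]
    simp only [← Finset.mul_sum]
    simp [hcol]
  calc ∑ i, ∑ j, (r i j - e i + e j) ^ 2
      = ∑ i, ∑ j, ((r i j) ^ 2 + (e i - e j) ^ 2
          - 2 * (e i * r i j) + 2 * (e j * r i j)) := by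
        refine Finset.sum_congr rfl fun i _ => Finset.sum_congr rfl fun j _ => ?_
        ring
    _ = (∑ i, ∑ j, (r i j) ^ 2) + (∑ i, ∑ j, (e i - e j) ^ 2)
          - 2 * (∑ i, ∑ j, e i * r i j) + 2 * (∑ i, ∑ j, e j * r i j) := by
        simp [Finset.sum_add_distrib, Finset.sum_sub_distrib, Finset.mul_sum]
    _ = (∑ i, ∑ j, (r i j) ^ 2) + ∑ i, ∑ j, (e i - e j) ^ 2 := by
        rw [h1, h2]; ring

/-- For a symmetrically reciprocal positive matrix `A`, a positive vector `x`
minimizes the log-Euclidean approximation error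
`∑_{i,j} (log a_ij − log x_i + log x j)²` over positive vectors if and only if
`x` is a positive multiple of the geometric-mean vector with entries
`(∏_j a_ij)^(1/n)`. -/
theorem geometric_mean_minimizes_log_euclidean (n : ℕ) (hn : 1 ≤ n)
    (A : Matrix (Fin n) (Fin n) ℝ) (hA : ∀ i j, 0 < A i j)
    (hrec : ∀ i j, A j i = 1 / A i j)
    (x : Fin n → ℝ) (hx : ∀ i, 0 < x i) :
    (∀ y : Fin n → ℝ, (∀ i, 0 < y i) →
        (∑ i, ∑ j, (Real.log (A i j) - Real.log (x i) + Real.log (x j)) ^ 2) ≤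
          (∑ i, ∑ j, (Real.log (A i j) - Real.log (y i) + Real.log (y j)) ^ 2)) ↔
      ∃ u : ℝ, 0 < u ∧ ∀ i, x i = u * (∏ j, A i j) ^ ((1 : ℝ) / n) := by
  have hn0 : (n : ℝ) ≠ 0 := by
    have : 0 < n := hn
    exact_mod_cast this.ne'
  set B : Fin n → Fin n → ℝ := fun i j => Real.log (A i j) with hB
  set g : Fin n → ℝ := fun i => (∑ j, B i j) / n with hg
  set r : Fin n → Fin n → ℝ := fun i j => B i j - g i + g j with hr
  have hBanti : ∀ i j, B j i = - B i j := by
    intro i j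
    simp only [hB]
    rw [hrec, one_div, Real.log_inv]
  have hBsum : ∑ i, ∑ j, B i j = 0 := by
    have h1 : ∑ i, ∑ j, B i j = ∑ j, ∑ i, B i j := Finset.sum_comm
    have h2 : ∑ j, ∑ i, B i j = - ∑ j, ∑ i, B j i := by
      rw [← Finset.sum_neg_distrib]
      refine Finset.sum_congr rfl fun j _ => ?_
      rw [← Finset.sum_neg_distrib]
      exact Finset.sum_congr rfl fun i _ => hBanti j i
    have h3 : ∑ j, ∑ i, B j i = ∑ i, ∑ j, B i j := rfl
    rw [h3] at h2
    linarith [h1, h2]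
  have hgsum : ∑ j, g j = 0 := by
    simp only [hg]
    rw [← Finset.sum_div, hBsum, zero_div]
  have hrrow : ∀ i, ∑ j, r i j = 0 := by
    intro i
    have : ∑ j, r i j = (∑ j, B i j) - n * g i + ∑ j, g j := by
      simp [hr, Finset.sum_add_distrib, Finset.sum_sub_distrib, Finset.sum_const,
        Finset.card_fin, nsmul_eq_mul]
    rw [this, hgsum]
    simp only [hg]
    field_simp
    ring
  have hranti : ∀ i j, r j i = - r i j := by
    intro i j
    simp only [hr]
    rw [hBanti]
    ring
  have hrcol : ∀ j, ∑ i, r i j = 0 := by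
    intro j
    have h1 : ∑ i, r i j = - ∑ i, r j i := by
      rw [← Finset.sum_neg_distrib]
      exact Finset.sum_congr rfl fun i _ => hranti j i
    rw [h1, hrrow j, neg_zero]
  have key := sum_sq_decomp_aux n r hrrow hrcol
  -- the objective for a positive vector y equals C + ∑∑ (e i - e j)^2, e i = log y i - g i
  have hobj : ∀ y : Fin n → ℝ, (∀ i, 0 < y i) →
      (∑ i, ∑ j, (Real.log (A i j) - Real.log (y i) + Real.log (y j)) ^ 2) =
        (∑ i, ∑ j, (r i j) ^ 2) +
          ∑ i, ∑ j, ((Real.log (y i) - g i) - (Real.log (y j) - g j)) ^ 2 := by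
    intro y hy
    have h1 : ∀ i j, Real.log (A i j) - Real.log (y i) + Real.log (y j) =
        r i j - (Real.log (y i) - g i) + (Real.log (y j) - g j) := by
      intro i j
      simp only [hr, hB]
      ring
    rw [show (∑ i, ∑ j, (Real.log (A i j) - Real.log (y i) + Real.log (y j)) ^ 2) =
        ∑ i, ∑ j, (r i j - (Real.log (y i) - g i) + (Real.log (y j) - g j)) ^ 2 from
      Finset.sum_congr rfl fun i _ => Finset.sum_congr rfl fun j _ => by rw [h1]]
    exact key _
  have hgm : ∀ i, (∏ j, A i j) ^ ((1 : ℝ) / n) = Real.exp (g i) := by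
    intro i
    have hp : 0 < ∏ j, A i j := Finset.prod_pos fun j _ => hA i j
    rw [Real.rpow_def_of_pos hp, Real.log_prod (fun j _ => (hA i j).ne')]
    simp only [hg, hB]
    rw [mul_one_div]
  constructor
  · intro h
    set e : Fin n → ℝ := fun i => Real.log (x i) - g i with he
    -- evaluate at the geometric mean vector
    have hy0 : ∀ i : Fin n, (0:ℝ) < Real.exp (g i) := fun i => Real.exp_pos _
    have h0 := h (fun i => Real.exp (g i)) hy0
    rw [hobj x hx, hobj (fun i => Real.exp (g i)) hy0] at h0
    simp only [Real.log_exp, sub_self, sub_zero, zero_sub, neg_zero, ne_eq,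
      zero_pow, Finset.sum_const_zero, add_zero, OfNat.ofNat_ne_zero,
      not_false_eq_true] at h0
    have hS : (∑ i, ∑ j, (e i - e j) ^ 2) ≤ 0 := by
      simp only [he]
      linarith [h0]
    have hSz : ∀ i j : Fin n, e i = e j := by
      intro i j
      by_contra hne
      have hpos : 0 < (e i - e j) ^ 2 := by
        have : e i - e j ≠ 0 := sub_ne_zero.mpr hne
        positivity
      have hge : (e i - e j) ^ 2 ≤ ∑ i', ∑ j', (e i' - e j') ^ 2 := by
        have hji : (e i - e j) ^ 2 ≤ ∑ j', (e i - e j') ^ 2 :=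
          Finset.single_le_sum (f := fun j' => (e i - e j') ^ 2)
            (fun _ _ => sq_nonneg _) (Finset.mem_univ j)
        have := Finset.single_le_sum (f := fun i' => ∑ j', (e i' - e j') ^ 2)
            (fun i' _ => Finset.sum_nonneg fun _ _ => sq_nonneg _) (Finset.mem_univ i)
        linarith
      linarith
    refine ⟨Real.exp (e ⟨0, hn⟩), Real.exp_pos _, fun i => ?_⟩
    rw [hgm i, ← Real.exp_add, ← hSz i ⟨0, hn⟩]
    have : e i + g i = Real.log (x i) := by simp [he]
    rw [this, Real.exp_log (hx i)]
  · rintro ⟨u, hu, hxu⟩ y hy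
    have hlx : ∀ i, Real.log (x i) = Real.log u + g i := by
      intro i
      rw [hxu i, hgm i, Real.log_mul hu.ne' (Real.exp_pos _).ne', Real.log_exp]
    rw [hobj x hx, hobj y hy]
    have hz : (∑ i, ∑ j, ((Real.log (x i) - g i) - (Real.log (x j) - g j)) ^ 2) = 0 := by
      refine Finset.sum_eq_zero fun i _ => Finset.sum_eq_zero fun j _ => ?_
      rw [hlx i, hlx j]
      ring
    rw [hz]
    have : (0:ℝ) ≤ ∑ i, ∑ j, ((Real.log (y i) - g i) - (Real.log (y j) - g j)) ^ 2 :=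
      Finset.sum_nonneg fun i _ => Finset.sum_nonneg fun j _ => sq_nonneg _
    linarith
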